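/- arXiv:math/0508548 — 5 statements merged into one kernel-verified Lean document; each statement's English description precedes it below -/
import Mathlib

section
/- Let A be an algebra with ternary term operations t_0, t_1, t_2 satisfying t_0(x,y,z)=x, t_0(x,x,y)=t_1(x,y,y), t_1(x,x,y)=t_2(x,y,y), and t_2(x,y,z)=z (Hagemann–Mitschke terms for 2-permutability, i.e. a Mal'tsev-style chain of length 2). Then for all congruences α, β, γ, δ of A, the relation α∩(β∘(α∩(γ∘(α∩δ)∘γ))∘β) equals α∩(γ∘(α∩(β∘(α∩δ)∘β))∘γ), where ∘ denotes relational composition. -/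
/-- `t` preserves the binary relation `θ` (θ is compatible with `t`). -/
def PreservesRel {A : Type*} (t : A → A → A → A) (θ : A → A → Prop) : Prop :=
  ∀ a a' b b' c c', θ a a' → θ b b' → θ c c' → θ (t a b c) (t a' b' c')

private lemma key_dir {A : Type*} (m : A → A → A → A)
    (hm1 : ∀ x y, m x y y = x) (hm2 : ∀ x y, m x x y = y)
    (α β γ δ : A → A → Prop)
    (hβr : ∀ a, β a a) (hγr : ∀ a, γ a a) (hγs : ∀ {a b}, γ a b → γ b a)
    (hpα : PreservesRel m α) (hpβ : PreservesRel m β) (hpγ : PreservesRel m γ) :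
    ∀ a b : A,
      (α a b ∧ Relation.Comp (Relation.Comp β
        (fun x y => α x y ∧ Relation.Comp (Relation.Comp γ
          (fun u v => α u v ∧ δ u v)) γ x y)) β a b) →
      (α a b ∧ Relation.Comp (Relation.Comp γ
        (fun x y => α x y ∧ Relation.Comp (Relation.Comp β
          (fun u v => α u v ∧ δ u v)) β x y)) γ a b) := by
  rintro a b ⟨hab, y, ⟨x, hax, hxy, v, ⟨u, hxu, huv, huvδ⟩, hvy⟩, hyb⟩
  refine ⟨hab, m b y v, ⟨m a x u, ?_, ?_, v, ⟨u, ?_, huv, huvδ⟩, ?_⟩, ?_⟩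
  · -- γ a (m a x u)
    have : γ (m a x x) (m a x u) := hpγ a a x x x u (hγr a) (hγr x) hxu
    rwa [hm1] at this
  · -- α (m a x u) (m b y v)
    exact hpα a b x y u v hab hxy huv
  · -- β (m a x u) u
    have : β (m a x u) (m x x u) := hpβ a x x x u u hax (hβr x) (hβr u)
    rwa [hm2] at this
  · -- β v (m b y v)
    have : β (m y y v) (m b y v) := hpβ y b y y v v hyb (hβr y) (hβr v)
    rwa [hm2] at this
  · -- γ (m b y v) b
    have : γ (m b y v) (m b y y) := hpγ b b y y v y (hγr b) (hγr y) hvy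
    rwa [hm1] at this

/-- Hagemann–Mitschke terms for 2-permutability imply the identity (X₂):
α∩(β∘(α∩(γ∘(α∩δ)∘γ))∘β) = α∩(γ∘(α∩(β∘(α∩δ)∘β))∘γ). -/
theorem stmt0 {A : Type*} (t₀ t₁ t₂ : A → A → A → A)
    (h0 : ∀ x y z, t₀ x y z = x)
    (h01 : ∀ x y, t₀ x x y = t₁ x y y)
    (h12 : ∀ x y, t₁ x x y = t₂ x y y)
    (h2 : ∀ x y z, t₂ x y z = z)
    (α β γ δ : A → A → Prop)
    (hα : Equivalence α) (hβ : Equivalence β) (hγ : Equivalence γ) (hδ : Equivalence δ)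
    (hpres : ∀ t ∈ ([t₀, t₁, t₂] : List (A → A → A → A)),
      ∀ θ ∈ ([α, β, γ, δ] : List (A → A → Prop)), PreservesRel t θ) :
    ∀ a b : A,
      (α a b ∧ Relation.Comp (Relation.Comp β
        (fun x y => α x y ∧ Relation.Comp (Relation.Comp γ
          (fun u v => α u v ∧ δ u v)) γ x y)) β a b)
      ↔
      (α a b ∧ Relation.Comp (Relation.Comp γ
        (fun x y => α x y ∧ Relation.Comp (Relation.Comp β
          (fun u v => α u v ∧ δ u v)) β x y)) γ a b) := by
  have hm1 : ∀ x y, t₁ x y y = x := fun x y => by rw [← h01, h0]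
  have hm2 : ∀ x y, t₁ x x y = y := fun x y => by rw [h12, h2]
  have ht₁ : t₁ ∈ ([t₀, t₁, t₂] : List (A → A → A → A)) := by simp
  have hpα := hpres t₁ ht₁ α (by simp)
  have hpβ := hpres t₁ ht₁ β (by simp)
  have hpγ := hpres t₁ ht₁ γ (by simp)
  intro a b
  constructor
  · exact key_dir t₁ hm1 hm2 α β γ δ hβ.refl hγ.refl (fun h => hγ.symm h) hpα hpβ hpγ a b
  · exact key_dir t₁ hm1 hm2 α γ β δ hγ.refl hβ.refl (fun h => hβ.symm h) hpα hpγ hpβ a b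
end

section
/- Let A be an algebra with ternary term operations t_0, t_1, t_2, t_3 satisfying t_0(x,y,z)=x, t_i(x,x,y)=t_{i+1}(x,y,y) for i=0,1,2, and t_3(x,y,z)=z (Hagemann–Mitschke terms for 3-permutability). Then for all congruences α, β, γ, δ of A: α∩(β∘(α∩(γ∘(α∩(β∘(α∩δ)∘β))∘γ))∘β) = α∩(γ∘(α∩(β∘(α∩(γ∘(α∩δ)∘γ))∘β))∘γ). -/
/-- One inclusion of the (X₃) identity; applied twice (with β and γ swapped)
it yields the full identity. -/
lemma hm_key {A : Type*} (t₀ t₁ t₂ t₃ : A → A → A → A)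
    (h0 : ∀ x y z, t₀ x y z = x)
    (h01 : ∀ x y, t₀ x x y = t₁ x y y)
    (h12 : ∀ x y, t₁ x x y = t₂ x y y)
    (h23 : ∀ x y, t₂ x x y = t₃ x y y)
    (h3 : ∀ x y z, t₃ x y z = z)
    (α β γ δ : A → A → Prop)
    (hα : Equivalence α) (hβ : Equivalence β) (hγ : Equivalence γ) (hδ : Equivalence δ)
    (p1α : PreservesRel t₁ α) (p1β : PreservesRel t₁ β) (p1γ : PreservesRel t₁ γ)
    (p2α : PreservesRel t₂ α) (p2β : PreservesRel t₂ β) (p2γ : PreservesRel t₂ γ)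
    (p2δ : PreservesRel t₂ δ) :
    ∀ a b : A,
      (α a b ∧ Relation.Comp (Relation.Comp β
        (fun x y => α x y ∧ Relation.Comp (Relation.Comp γ
          (fun u v => α u v ∧ Relation.Comp (Relation.Comp β
            (fun p q => α p q ∧ δ p q)) β u v)) γ x y)) β a b)
      →
      (α a b ∧ Relation.Comp (Relation.Comp γ
        (fun x y => α x y ∧ Relation.Comp (Relation.Comp β
          (fun u v => α u v ∧ Relation.Comp (Relation.Comp γ
            (fun p q => α p q ∧ δ p q)) γ u v)) β x y)) γ a b) := by
  have e1 : ∀ x y : A, t₁ x y y = x := fun x y => ((h01 x y).symm.trans (h0 x x y))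
  have e3 : ∀ x y : A, t₂ x x y = y := fun x y => (h23 x y).trans (h3 x y y)
  rintro a b ⟨hab, y, ⟨x, hax, hxy, v, ⟨u, hxu, huv, q, ⟨p, hup, hpq, hpqd⟩, hqv⟩, hvy⟩, hyb⟩
  -- names: β a x, α x y, γ x u, α u v, β u p, α p q, δ p q, β q v, γ v y, β y b
  refine ⟨hab, t₁ (t₁ b y v) v y, ⟨t₁ (t₁ a x u) v y, ?_, ?_,
    t₁ (t₂ y v q) v y, ⟨t₁ (t₂ x u p) v y, ?_, ?_,
      t₂ (t₁ u y v) u q, ⟨t₂ (t₁ u y v) u p, ?_, ?_, ?_⟩, ?_⟩, ?_⟩, ?_⟩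
  · -- γ a (t₁ (t₁ a x u) v y)
    have s1 : γ (t₁ (t₁ a x u) v y) (t₁ (t₁ a x u) y y) :=
      p1γ _ _ _ _ _ _ (hγ.refl _) hvy (hγ.refl _)
    rw [e1] at s1
    have s2 : γ (t₁ a x u) (t₁ a u u) :=
      p1γ _ _ _ _ _ _ (hγ.refl _) hxu (hγ.refl _)
    rw [e1] at s2
    exact hγ.symm (hγ.trans s1 s2)
  · -- α x' y'
    exact p1α _ _ _ _ _ _ (p1α _ _ _ _ _ _ hab hxy huv) (hα.refl _) (hα.refl _)
  · -- β x' u'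
    have i1 : β (t₁ a x u) (t₁ x x u) := p1β _ _ _ _ _ _ hax (hβ.refl _) (hβ.refl _)
    rw [h12] at i1
    have i2 : β (t₂ x u u) (t₂ x u p) := p2β _ _ _ _ _ _ (hβ.refl _) (hβ.refl _) hup
    exact p1β _ _ _ _ _ _ (hβ.trans i1 i2) (hβ.refl _) (hβ.refl _)
  · -- α u' v'
    exact p1α _ _ _ _ _ _ (p2α _ _ _ _ _ _ hxy huv hpq) (hα.refl _) (hα.refl _)
  · -- γ u' p'
    have u1 : γ (t₁ (t₂ x u p) v y) (t₁ (t₂ x u p) y y) :=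
      p1γ _ _ _ _ _ _ (hγ.refl _) hvy (hγ.refl _)
    rw [e1] at u1
    have u2 : γ (t₂ x u p) (t₂ u u p) := p2γ _ _ _ _ _ _ hxu (hγ.refl _) (hγ.refl _)
    rw [e3] at u2
    have inner : γ (t₁ u y v) u := by
      have := p1γ _ _ _ _ _ _ (hγ.refl u) (hγ.refl y) hvy
      rw [e1] at this
      exact this
    have pp : γ (t₂ (t₁ u y v) u p) (t₂ u u p) :=
      p2γ _ _ _ _ _ _ inner (hγ.refl _) (hγ.refl _)
    rw [e3] at pp
    exact hγ.trans (hγ.trans u1 u2) (hγ.symm pp)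
  · -- α p' q'
    exact p2α _ _ _ _ _ _ (hα.refl _) (hα.refl _) hpq
  · -- δ p' q'
    exact p2δ _ _ _ _ _ _ (hδ.refl _) (hδ.refl _) hpqd
  · -- γ q' v'
    have inner : γ (t₁ u y v) u := by
      have := p1γ _ _ _ _ _ _ (hγ.refl u) (hγ.refl y) hvy
      rw [e1] at this
      exact this
    have qq : γ (t₂ (t₁ u y v) u q) (t₂ u u q) :=
      p2γ _ _ _ _ _ _ inner (hγ.refl _) (hγ.refl _)
    rw [e3] at qq
    have v1 : γ (t₁ (t₂ y v q) v y) (t₁ (t₂ y v q) y y) :=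
      p1γ _ _ _ _ _ _ (hγ.refl _) hvy (hγ.refl _)
    rw [e1] at v1
    have v2 : γ (t₂ y v q) (t₂ y y q) := p2γ _ _ _ _ _ _ (hγ.refl _) hvy (hγ.refl _)
    rw [e3] at v2
    exact hγ.trans qq (hγ.symm (hγ.trans v1 v2))
  · -- β v' y'
    have j1 : β (t₂ y v q) (t₂ y q q) :=
      p2β _ _ _ _ _ _ (hβ.refl _) (hβ.symm hqv) (hβ.refl _)
    rw [← h12] at j1
    have j2 : β (t₁ b y v) (t₁ y y q) :=
      p1β _ _ _ _ _ _ (hβ.symm hyb) (hβ.refl _) (hβ.symm hqv)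
    exact p1β _ _ _ _ _ _ (hβ.trans j1 (hβ.symm j2)) (hβ.refl _) (hβ.refl _)
  · -- γ y' b
    have s1 : γ (t₁ (t₁ b y v) v y) (t₁ (t₁ b v v) y y) :=
      p1γ _ _ _ _ _ _ (p1γ _ _ _ _ _ _ (hγ.refl _) (hγ.symm hvy) (hγ.refl _)) hvy
        (hγ.refl _)
    rw [e1, e1] at s1
    exact s1

/-- Hagemann–Mitschke terms for 3-permutability imply the identity (X₃):
α∩(β∘(α∩(γ∘(α∩(β∘(α∩δ)∘β))∘γ))∘β) = α∩(γ∘(α∩(β∘(α∩(γ∘(α∩δ)∘γ))∘β))∘γ). -/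
theorem stmt1 {A : Type*} (t₀ t₁ t₂ t₃ : A → A → A → A)
    (h0 : ∀ x y z, t₀ x y z = x)
    (h01 : ∀ x y, t₀ x x y = t₁ x y y)
    (h12 : ∀ x y, t₁ x x y = t₂ x y y)
    (h23 : ∀ x y, t₂ x x y = t₃ x y y)
    (h3 : ∀ x y z, t₃ x y z = z)
    (α β γ δ : A → A → Prop)
    (hα : Equivalence α) (hβ : Equivalence β) (hγ : Equivalence γ) (hδ : Equivalence δ)
    (hpres : ∀ t ∈ ([t₀, t₁, t₂, t₃] : List (A → A → A → A)),
      ∀ θ ∈ ([α, β, γ, δ] : List (A → A → Prop)), PreservesRel t θ) :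
    ∀ a b : A,
      (α a b ∧ Relation.Comp (Relation.Comp β
        (fun x y => α x y ∧ Relation.Comp (Relation.Comp γ
          (fun u v => α u v ∧ Relation.Comp (Relation.Comp β
            (fun p q => α p q ∧ δ p q)) β u v)) γ x y)) β a b)
      ↔
      (α a b ∧ Relation.Comp (Relation.Comp γ
        (fun x y => α x y ∧ Relation.Comp (Relation.Comp β
          (fun u v => α u v ∧ Relation.Comp (Relation.Comp γ
            (fun p q => α p q ∧ δ p q)) γ u v)) β x y)) γ a b) := by
  have m1 : t₁ ∈ ([t₀, t₁, t₂, t₃] : List (A → A → A → A)) := by simp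
  have m2 : t₂ ∈ ([t₀, t₁, t₂, t₃] : List (A → A → A → A)) := by simp
  have mα : α ∈ ([α, β, γ, δ] : List (A → A → Prop)) := by simp
  have mβ : β ∈ ([α, β, γ, δ] : List (A → A → Prop)) := by simp
  have mγ : γ ∈ ([α, β, γ, δ] : List (A → A → Prop)) := by simp
  have mδ : δ ∈ ([α, β, γ, δ] : List (A → A → Prop)) := by simp
  intro a b
  constructor
  · exact hm_key t₀ t₁ t₂ t₃ h0 h01 h12 h23 h3 α β γ δ hα hβ hγ hδ
      (hpres t₁ m1 α mα) (hpres t₁ m1 β mβ) (hpres t₁ m1 γ mγ)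
      (hpres t₂ m2 α mα) (hpres t₂ m2 β mβ) (hpres t₂ m2 γ mγ)
      (hpres t₂ m2 δ mδ) a b
  · exact hm_key t₀ t₁ t₂ t₃ h0 h01 h12 h23 h3 α γ β δ hα hγ hβ hδ
      (hpres t₁ m1 α mα) (hpres t₁ m1 γ mγ) (hpres t₁ m1 β mβ)
      (hpres t₂ m2 α mα) (hpres t₂ m2 γ mγ) (hpres t₂ m2 β mβ)
      (hpres t₂ m2 δ mδ) a b
end

section
/- Suppose (a_0, b_0) belongs to the left-hand side of the identity (X_m), i.e. there exist elements a_1,…,a_m and b_1,…,b_m with a_i α b_i for all i=0,…,m, a_m δ b_m, and a_i β a_{i+1}, b_i β b_{i+1} for even i < m, a_i γ a_{i+1}, b_i γ b_{i+1} for odd i < m, where α, β, γ, δ are congruences of an algebra A admitting Hagemann–Mitschke terms t_0,…,t_m (t_0(x,y,z)=x, t_i(x,x,y)=t_{i+1}(x,y,y), t_m(x,y,z)=z). Then defining c_i = t_i(a_{i-1},a_i,a_{i+1}) and d_i = t_i(b_{i-1},b_i,b_{i+1}) for 1 ≤ i ≤ m−1, and c_m = a_m, d_m = b_m, the elements c_i,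 d_i witness that (a_0,b_0) belongs to the right-hand side of (X_m): c_i α d_i for all i, c_m (α∩δ) d_m, a_0 γ c_1, b_0 γ d_1, and c_i, c_{i+1} (resp. d_i, d_{i+1}) are related by γ for even i and by β for odd i. -/
/-- Given a witness (a₀,…,a_m, b₀,…,b_m) that (a₀,b₀) is in the left-hand side of (X_m),
and Hagemann–Mitschke terms t₀,…,t_m, the elements c_i = t_i(a_{i-1},a_i,a_{i+1}),
d_i = t_i(b_{i-1},b_i,b_{i+1}) (1 ≤ i ≤ m−1), c_m = a_m, d_m = b_m witness that
(a₀,b₀) is in the right-hand side of (X_m). -/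
theorem stmt2 {A : Type*} (m : ℕ) (hm : 1 ≤ m)
    (t : ℕ → A → A → A → A)
    (ht0 : ∀ x y z, t 0 x y z = x)
    (hti : ∀ i < m, ∀ x y, t i x x y = t (i + 1) x y y)
    (htm : ∀ x y z, t m x y z = z)
    (α β γ δ : A → A → Prop)
    (hα : Equivalence α) (hβ : Equivalence β) (hγ : Equivalence γ) (hδ : Equivalence δ)
    (hpres : ∀ i ≤ m, ∀ θ ∈ ([α, β, γ, δ] : List (A → A → Prop)), PreservesRel (t i) θ)
    (a b c d : ℕ → A)
    (hab : ∀ i ≤ m, α (a i) (b i))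
    (habδ : δ (a m) (b m))
    (haβ : ∀ i < m, i % 2 = 0 → β (a i) (a (i + 1)))
    (hbβ : ∀ i < m, i % 2 = 0 → β (b i) (b (i + 1)))
    (haγ : ∀ i < m, i % 2 = 1 → γ (a i) (a (i + 1)))
    (hbγ : ∀ i < m, i % 2 = 1 → γ (b i) (b (i + 1)))
    (hc : ∀ i, 1 ≤ i → i ≤ m - 1 → c i = t i (a (i - 1)) (a i) (a (i + 1)))
    (hcm : c m = a m)
    (hd : ∀ i, 1 ≤ i → i ≤ m - 1 → d i = t i (b (i - 1)) (b i) (b (i + 1)))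
    (hdm : d m = b m) :
    (∀ i, 1 ≤ i → i ≤ m → α (c i) (d i)) ∧
    (α (c m) (d m) ∧ δ (c m) (d m)) ∧
    γ (a 0) (c 1) ∧ γ (b 0) (d 1) ∧
    (∀ i, 1 ≤ i → i < m →
      (i % 2 = 0 → γ (c i) (c (i + 1)) ∧ γ (d i) (d (i + 1))) ∧
      (i % 2 = 1 → β (c i) (c (i + 1)) ∧ β (d i) (d (i + 1)))) := by
  have hαpres : ∀ i ≤ m, PreservesRel (t i) α := fun i hi => hpres i hi α (by simp)
  have hβpres : ∀ i ≤ m, PreservesRel (t i) β := fun i hi => hpres i hi β (by simp)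
  have hγpres : ∀ i ≤ m, PreservesRel (t i) γ := fun i hi => hpres i hi γ (by simp)
  -- helper: one shifting step
  have main : ∀ (θ : A → A → Prop), Equivalence θ →
      (∀ j ≤ m, PreservesRel (t j) θ) →
      ∀ (a c : ℕ → A),
      (∀ i, 1 ≤ i → i ≤ m - 1 → c i = t i (a (i - 1)) (a i) (a (i + 1))) →
      c m = a m →
      ∀ i, 1 ≤ i → i < m →
      θ (a (i - 1)) (a i) →
      (i + 1 < m → θ (a (i + 1)) (a (i + 1 + 1))) →
      θ (c i) (c (i + 1)) := by
    intro θ hθ hθpres a c hc hcm i h1 hlt h01 h12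
    have hci : c i = t i (a (i - 1)) (a i) (a (i + 1)) := hc i h1 (by omega)
    have step1 : θ (t i (a (i - 1)) (a i) (a (i + 1))) (t i (a i) (a i) (a (i + 1))) :=
      hθpres i (by omega) _ _ _ _ _ _ h01 (hθ.refl _) (hθ.refl _)
    rw [hti i hlt] at step1
    rcases eq_or_lt_of_le (Nat.succ_le_of_lt hlt) with hm2 | hm2
    · -- i + 1 = m
      subst hm2
      rw [htm] at step1
      rw [hci, hcm]
      exact step1
    · have hci1 : c (i + 1) = t (i + 1) (a (i + 1 - 1)) (a (i + 1)) (a (i + 1 + 1)) :=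
        hc (i + 1) (by omega) (by omega)
      rw [Nat.add_sub_cancel] at hci1
      have step2 : θ (t (i + 1) (a i) (a (i + 1)) (a (i + 1)))
          (t (i + 1) (a i) (a (i + 1)) (a (i + 1 + 1))) :=
        hθpres (i + 1) (by omega) _ _ _ _ _ _ (hθ.refl _) (hθ.refl _) (h12 hm2)
      rw [hci, hci1]
      exact hθ.trans step1 step2
  refine ⟨?_, ⟨?_, ?_⟩, ?_, ?_, ?_⟩
  · -- α (c i) (d i)
    intro i h1 hle
    rcases eq_or_lt_of_le hle with rfl | hlt
    · rw [hcm, hdm]; exact hab i le_rfl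
    · rw [hc i h1 (by omega), hd i h1 (by omega)]
      exact hαpres i (le_of_lt hlt) _ _ _ _ _ _ (hab _ (by omega)) (hab _ (by omega))
        (hab _ (by omega))
  · rw [hcm, hdm]; exact hab m le_rfl
  · rw [hcm, hdm]; exact habδ
  · -- γ (a 0) (c 1)
    rcases eq_or_lt_of_le hm with rfl | hm2
    · have heq : ∀ x y : A, x = y := by
        intro x y
        have h1 := hti 0 (by omega) x y
        rw [ht0, htm] at h1
        exact h1
      have : a 0 = c 1 := heq _ _
      rw [← this]; exact hγ.refl _
    · have hc1 : c 1 = t 1 (a 0) (a 1) (a (1 + 1)) := hc 1 le_rfl (by omega)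
      have key : t 1 (a 0) (a 1) (a 1) = a 0 := by
        rw [← hti 0 (by omega), ht0]
      have step : γ (t 1 (a 0) (a 1) (a 1)) (t 1 (a 0) (a 1) (a (1 + 1))) :=
        hγpres 1 (by omega) _ _ _ _ _ _ (hγ.refl _) (hγ.refl _) (haγ 1 (by omega) rfl)
      rw [hc1]
      rw [key] at step; exact step
  · -- γ (b 0) (d 1)
    rcases eq_or_lt_of_le hm with rfl | hm2
    · have heq : ∀ x y : A, x = y := by
        intro x y
        have h1 := hti 0 (by omega) x y
        rw [ht0, htm] at h1
        exact h1
      have : b 0 = d 1 := heq _ _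
      rw [← this]; exact hγ.refl _
    · have hd1 : d 1 = t 1 (b 0) (b 1) (b (1 + 1)) := hd 1 le_rfl (by omega)
      have key : t 1 (b 0) (b 1) (b 1) = b 0 := by
        rw [← hti 0 (by omega), ht0]
      have step : γ (t 1 (b 0) (b 1) (b 1)) (t 1 (b 0) (b 1) (b (1 + 1))) :=
        hγpres 1 (by omega) _ _ _ _ _ _ (hγ.refl _) (hγ.refl _) (hbγ 1 (by omega) rfl)
      rw [hd1]
      rw [key] at step; exact step
  · intro i h1 hlt
    constructor
    · intro hev
      have ha01 : γ (a (i - 1)) (a i) := by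
        have := haγ (i - 1) (by omega) (by omega)
        rwa [Nat.sub_add_cancel h1] at this
      have hb01 : γ (b (i - 1)) (b i) := by
        have := hbγ (i - 1) (by omega) (by omega)
        rwa [Nat.sub_add_cancel h1] at this
      exact ⟨main γ hγ hγpres a c hc hcm i h1 hlt ha01
          (fun h => haγ (i + 1) h (by omega)),
        main γ hγ hγpres b d hd hdm i h1 hlt hb01
          (fun h => hbγ (i + 1) h (by omega))⟩
    · intro hodd
      have ha01 : β (a (i - 1)) (a i) := by
        have := haβ (i - 1) (by omega) (by omega)
        rwa [Nat.sub_add_cancel h1] at this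
      have hb01 : β (b (i - 1)) (b i) := by
        have := hbβ (i - 1) (by omega) (by omega)
        rwa [Nat.sub_add_cancel h1] at this
      exact ⟨main β hβ hβpres a c hc hcm i h1 hlt ha01
          (fun h => haβ (i + 1) h (by omega)),
        main β hβ hβpres b d hd hdm i h1 hlt hb01
          (fun h => hbβ (i + 1) h (by omega))⟩
end

section
/- Let A be an algebra with Hagemann–Mitschke terms t_0,…,t_m (t_0(x,y,z)=x, t_i(x,x,y)=t_{i+1}(x,y,y) for 0 ≤ i ≤ m−1, t_m(x,y,z)=z). Let R_0,…,R_m be arbitrary relations on A and S_1,…,S_m, T_1,…,T_m reflexive relations on A. Define R'_i as the least compatible relation containing R_{i−1} ∪ R_i ∪ R_{i+1} for 1 ≤ i ≤ m−1; S'_1 = closure of S_2, T'_1 = closure of T_2, S'_m = closure of S_{m−1}, T'_m = closure of T_{m−1}; and S'_i = (closure of S_{i−1}) ∘ (closure of S_{i+1}), T'_i = (closure of T_{i+1}) ∘ (closure of T_{i−1}) for 2 ≤ i ≤ m−1, where 'closure of X' means the least compatible relation containing X. Then R_0 ∩ (S_1 ∘ R_1∩(S_2 ∘ R_2∩(… R_{m−1}∩(S_m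 ∘ R_m ∘ T_m) … ∘ T_2) ∘ T_1) ⊆ R_0 ∩ (S'_1 ∘ R'_1∩(S'_2 ∘ … R'_{m−1}∩(S'_m ∘ R_m ∘ T'_m) … ∘ T'_2) ∘ T'_1). -/
/-- A binary relation `R` is compatible with the algebra given by the
operations `ops` if it is preserved by every (basic) operation. -/
def Compatible {A ι : Type*} {ar : ι → ℕ} (ops : ∀ i : ι, (Fin (ar i) → A) → A)
    (R : A → A → Prop) : Prop :=
  ∀ i (f g : Fin (ar i) → A), (∀ k, R (f k) (g k)) → R (ops i f) (ops i g)

/-- The least compatible relation containing `X`. -/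
def Bar {A ι : Type*} {ar : ι → ℕ} (ops : ∀ i : ι, (Fin (ar i) → A) → A)
    (X : A → A → Prop) : A → A → Prop :=
  fun a b => ∀ R : A → A → Prop, Compatible ops R → (∀ x y, X x y → R x y) → R a b

/-- `Nest R S T k` is the relation `R k ∩ (S k ∘ (… ∩ (S 1 ∘ R 0 ∘ T 1) …) ∘ T k)`. -/
def Nest {A : Type*} (R S T : ℕ → A → A → Prop) : ℕ → A → A → Prop
  | 0 => R 0
  | k + 1 => fun a b => R (k + 1) a b ∧
      Relation.Comp (Relation.Comp (S (k + 1)) (Nest R S T k)) (T (k + 1)) a b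

theorem bar_compat {A ι : Type*} {ar : ι → ℕ} (ops : ∀ i : ι, (Fin (ar i) → A) → A)
    (X : A → A → Prop) : Compatible ops (Bar ops X) :=
  fun i f g h R hR hX => hR i f g fun k => h k R hR hX

theorem bar_le {A ι : Type*} {ar : ι → ℕ} (ops : ∀ i : ι, (Fin (ar i) → A) → A)
    (X : A → A → Prop) {x y : A} (h : X x y) : Bar ops X x y :=
  fun _ _ hX => hX x y h

theorem nest_unpack {A : Type*} (R S T : ℕ → A → A → Prop) (m : ℕ) :
    ∀ k, k ≤ m → ∀ a b,
      Nest (fun k => R (m - k)) (fun k => S (m + 1 - k)) (fun k => T (m + 1 - k)) k a b →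
      ∃ x y : ℕ → A, x 0 = a ∧ y 0 = b ∧
        (∀ j, j ≤ k → R (m - k + j) (x j) (y j)) ∧
        (∀ j, 1 ≤ j → j ≤ k → S (m - k + j) (x (j - 1)) (x j)) ∧
        (∀ j, 1 ≤ j → j ≤ k → T (m - k + j) (y j) (y (j - 1))) := by
  intro k
  induction k with
  | zero =>
    intro _ a b h
    simp only [Nest] at h
    refine ⟨fun _ => a, fun _ => b, rfl, rfl, ?_, by omega, by omega⟩
    intro j hj
    have : j = 0 := by omega
    subst this
    simpa using h
  | succ k ih =>
    intro hk a b h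
    simp only [Nest, Relation.Comp] at h
    obtain ⟨hR0, d, ⟨c, hS, hN⟩, hT⟩ := h
    obtain ⟨x, y, hx0, hy0, hRj, hSj, hTj⟩ := ih (by omega) c d hN
    refine ⟨fun j => if j = 0 then a else x (j - 1),
            fun j => if j = 0 then b else y (j - 1), rfl, rfl, ?_, ?_, ?_⟩
    · intro j hj
      match j with
      | 0 => simpa using hR0
      | j + 1 =>
        simp only [Nat.succ_ne_zero, if_false, Nat.add_sub_cancel]
        have e : m - (k + 1) + (j + 1) = m - k + j := by omega
        rw [e]
        exact hRj j (by omega)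
    · intro j h1 h2
      match j with
      | 1 =>
        simp only [show (1:ℕ) - 1 = 0 from rfl, if_pos rfl, Nat.one_ne_zero, if_false]
        have e : m - (k + 1) + 1 = m + 1 - (k + 1) := by omega
        rw [e, hx0]
        exact hS
      | j + 2 =>
        simp only [Nat.succ_ne_zero, if_false, Nat.add_sub_cancel]
        have e : m - (k + 1) + (j + 2) = m - k + (j + 1) := by omega
        have e2 : j + 2 - 1 = j + 1 := by omega
        rw [e, e2]
        simp only [Nat.succ_ne_zero, if_false, Nat.add_sub_cancel]
        exact hSj (j + 1) (by omega) (by omega)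
    · intro j h1 h2
      match j with
      | 1 =>
        simp only [show (1:ℕ) - 1 = 0 from rfl, if_pos rfl, Nat.one_ne_zero, if_false]
        have e : m - (k + 1) + 1 = m + 1 - (k + 1) := by omega
        rw [e, hy0]
        exact hT
      | j + 2 =>
        simp only [Nat.succ_ne_zero, if_false, Nat.add_sub_cancel]
        have e : m - (k + 1) + (j + 2) = m - k + (j + 1) := by omega
        have e2 : j + 2 - 1 = j + 1 := by omega
        rw [e, e2]
        simp only [Nat.succ_ne_zero, if_false, Nat.add_sub_cancel]
        exact hTj (j + 1) (by omega) (by omega)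

theorem nest_pack {A : Type*} (R S T : ℕ → A → A → Prop) (m : ℕ) (u v : ℕ → A)
    (hR : ∀ i, i ≤ m → R i (u i) (v i))
    (hS : ∀ i, 1 ≤ i → i ≤ m → S i (u (i - 1)) (u i))
    (hT : ∀ i, 1 ≤ i → i ≤ m → T i (v i) (v (i - 1))) :
    ∀ k, k ≤ m →
      Nest (fun k => R (m - k)) (fun k => S (m + 1 - k)) (fun k => T (m + 1 - k)) k
        (u (m - k)) (v (m - k)) := by
  intro k
  induction k with
  | zero =>
    intro _
    simp only [Nest]
    exact hR (m - 0) (by omega)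
  | succ k ih =>
    intro hk
    simp only [Nest, Relation.Comp]
    refine ⟨hR _ (by omega), v (m - k), ⟨u (m - k), ?_, ih (by omega)⟩, ?_⟩
    · have h1 : m + 1 - (k + 1) = m - k := by omega
      have h2 : m - (k + 1) = m - k - 1 := by omega
      rw [h1, h2]
      exact hS (m - k) (by omega) (by omega)
    · have h1 : m + 1 - (k + 1) = m - k := by omega
      have h2 : m - (k + 1) = m - k - 1 := by omega
      rw [h1, h2]
      exact hT (m - k) (by omega) (by omega)

/-- Proposition XX: in an algebra with Hagemann–Mitschke terms t₀,…,t_m,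
R₀ ∩ (S₁ ∘ R₁∩(S₂ ∘ … R_{m−1}∩(S_m ∘ R_m ∘ T_m) … ∘ T₂) ∘ T₁)
  ⊆ R₀ ∩ (S'₁ ∘ R'₁∩(S'₂ ∘ … R'_{m−1}∩(S'_m ∘ R_m ∘ T'_m) … ∘ T'₂) ∘ T'₁). -/
theorem stmt3 {A ι : Type*} {ar : ι → ℕ} (ops : ∀ i : ι, (Fin (ar i) → A) → A)
    (m : ℕ) (hm : 2 ≤ m)
    (t : ℕ → A → A → A → A)
    (ht0 : ∀ x y z, t 0 x y z = x)
    (hti : ∀ i < m, ∀ x y, t i x x y = t (i + 1) x y y)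
    (htm : ∀ x y z, t m x y z = z)
    (hterm : ∀ i ≤ m, ∀ R : A → A → Prop, Compatible ops R → PreservesRel (t i) R)
    (R S T R' S' T' : ℕ → A → A → Prop)
    (hSrefl : ∀ i, 1 ≤ i → i ≤ m → ∀ a, S i a a)
    (hTrefl : ∀ i, 1 ≤ i → i ≤ m → ∀ a, T i a a)
    (hR'0 : R' 0 = R 0) (hR'm : R' m = R m)
    (hR' : ∀ i, 1 ≤ i → i ≤ m - 1 →
      R' i = Bar ops (fun a b => R (i - 1) a b ∨ R i a b ∨ R (i + 1) a b))
    (hS'1 : S' 1 = Bar ops (S 2)) (hS'm : S' m = Bar ops (S (m - 1)))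
    (hS' : ∀ i, 2 ≤ i → i ≤ m - 1 →
      S' i = Relation.Comp (Bar ops (S (i - 1))) (Bar ops (S (i + 1))))
    (hT'1 : T' 1 = Bar ops (T 2)) (hT'm : T' m = Bar ops (T (m - 1)))
    (hT' : ∀ i, 2 ≤ i → i ≤ m - 1 →
      T' i = Relation.Comp (Bar ops (T (i + 1))) (Bar ops (T (i - 1)))) :
    ∀ a b : A,
      Nest (fun k => R (m - k)) (fun k => S (m + 1 - k)) (fun k => T (m + 1 - k)) m a b →
      Nest (fun k => R' (m - k)) (fun k => S' (m + 1 - k)) (fun k => T' (m + 1 - k)) m a b := by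
  intro a b h
  obtain ⟨x, y, hx0, hy0, hR0, hS0, hT0⟩ := nest_unpack R S T m m le_rfl a b h
  simp only [Nat.sub_self, Nat.zero_add] at hR0 hS0 hT0
  obtain ⟨u, hu⟩ : ∃ u : ℕ → A, ∀ i, u i = t i (x (i - 1)) (x i) (x (min (i + 1) m)) :=
    ⟨_, fun i => rfl⟩
  obtain ⟨v, hv⟩ : ∃ v : ℕ → A, ∀ i, v i = t i (y (i - 1)) (y i) (y (min (i + 1) m)) :=
    ⟨_, fun i => rfl⟩
  -- reflexivity of closures
  have refS : ∀ j, 1 ≤ j → j ≤ m → ∀ c, Bar ops (S j) c c :=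
    fun j h1 h2 c => bar_le ops _ (hSrefl j h1 h2 c)
  have refT : ∀ j, 1 ≤ j → j ≤ m → ∀ c, Bar ops (T j) c c :=
    fun j h1 h2 c => bar_le ops _ (hTrefl j h1 h2 c)
  -- the R' chain
  have hRc : ∀ i, i ≤ m → R' i (u i) (v i) := by
    intro i hi
    rcases eq_or_ne i 0 with rfl | h0
    · rw [hR'0, hu 0, hv 0, ht0, ht0]
      exact hR0 0 (by omega)
    rcases eq_or_ne i m with him | hm'
    · rw [him, hR'm, hu m, hv m, htm, htm]
      have e : min (m + 1) m = m := by omega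
      rw [e]
      exact hR0 m le_rfl
    · have h1 : 1 ≤ i := by omega
      have h2 : i ≤ m - 1 := by omega
      rw [hR' i h1 h2, hu i, hv i]
      have e : min (i + 1) m = i + 1 := by omega
      rw [e]
      exact hterm i (by omega) _ (bar_compat ops _) _ _ _ _ _ _
        (bar_le ops _ (Or.inl (hR0 (i - 1) (by omega))))
        (bar_le ops _ (Or.inr (Or.inl (hR0 i (by omega)))))
        (bar_le ops _ (Or.inr (Or.inr (hR0 (i + 1) (by omega)))))
  -- the S' chain
  have hSc : ∀ i, 1 ≤ i → i ≤ m → S' i (u (i - 1)) (u i) := by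
    intro i h1 h2
    rcases eq_or_ne i 1 with rfl | hne1
    · rw [hS'1, hu 0, hu 1, ht0]
      have e2 : min (1 + 1) m = 2 := by omega
      rw [e2]
      have key : Bar ops (S 2) (t 1 (x (1 - 1)) (x 1) (x 1)) (t 1 (x (1 - 1)) (x 1) (x 2)) :=
        hterm 1 (by omega) _ (bar_compat ops _)
          _ _ _ _ _ _ (refS 2 (by omega) (by omega) _) (refS 2 (by omega) (by omega) _)
          (bar_le ops _ (hS0 2 (by omega) (by omega)))
      rw [← hti 0 (by omega) (x (1 - 1)) (x 1), ht0] at key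
      exact key
    rcases eq_or_ne i m with him | hnem
    · rw [him, hS'm, hu (m - 1), hu m, htm]
      have e1 : min (m - 1 + 1) m = m := by omega
      have e2 : min (m + 1) m = m := by omega
      rw [e1, e2]
      have key : Bar ops (S (m - 1))
          (t (m - 1) (x (m - 1 - 1)) (x (m - 1)) (x m))
          (t (m - 1) (x (m - 1)) (x (m - 1)) (x m)) :=
        hterm (m - 1) (by omega) _ (bar_compat ops _) _ _ _ _ _ _
          (bar_le ops _ (hS0 (m - 1) (by omega) (by omega)))
          (refS (m - 1) (by omega) (by omega) _) (refS (m - 1) (by omega) (by omega) _)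
      rw [hti (m - 1) (by omega) (x (m - 1)) (x m), show m - 1 + 1 = m by omega, htm] at key
      exact key
    · have h2' : 2 ≤ i := by omega
      have h3 : i ≤ m - 1 := by omega
      rw [hS' i h2' h3, hu (i - 1), hu i]
      have e1 : min (i - 1 + 1) m = i := by omega
      have e1' : i - 1 + 1 = i := by omega
      have e2 : min (i + 1) m = i + 1 := by omega
      rw [e1, e2]
      refine ⟨t (i - 1) (x (i - 1)) (x (i - 1)) (x i), ?_, ?_⟩
      · exact hterm (i - 1) (by omega) _ (bar_compat ops _) _ _ _ _ _ _
          (bar_le ops _ (hS0 (i - 1) (by omega) (by omega)))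
          (refS (i - 1) (by omega) (by omega) _) (refS (i - 1) (by omega) (by omega) _)
      · rw [hti (i - 1) (by omega) (x (i - 1)) (x i), e1']
        exact hterm i (by omega) _ (bar_compat ops _) _ _ _ _ _ _
          (refS (i + 1) (by omega) (by omega) _) (refS (i + 1) (by omega) (by omega) _)
          (bar_le ops _ (hS0 (i + 1) (by omega) (by omega)))
  -- the T' chain
  have hTc : ∀ i, 1 ≤ i → i ≤ m → T' i (v i) (v (i - 1)) := by
    intro i h1 h2
    rcases eq_or_ne i 1 with rfl | hne1
    · rw [hT'1, hv 0, hv 1, ht0]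
      have e2 : min (1 + 1) m = 2 := by omega
      rw [e2]
      have key : Bar ops (T 2) (t 1 (y (1 - 1)) (y 1) (y 2)) (t 1 (y (1 - 1)) (y 1) (y 1)) :=
        hterm 1 (by omega) _ (bar_compat ops _)
          _ _ _ _ _ _ (refT 2 (by omega) (by omega) _) (refT 2 (by omega) (by omega) _)
          (bar_le ops _ (hT0 2 (by omega) (by omega)))
      rw [← hti 0 (by omega) (y (1 - 1)) (y 1), ht0] at key
      exact key
    rcases eq_or_ne i m with him | hnem
    · rw [him, hT'm, hv (m - 1), hv m, htm]
      have e1 : min (m - 1 + 1) m = m := by omega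
      have e2 : min (m + 1) m = m := by omega
      rw [e1, e2]
      have key : Bar ops (T (m - 1))
          (t (m - 1) (y (m - 1)) (y (m - 1)) (y m))
          (t (m - 1) (y (m - 1 - 1)) (y (m - 1)) (y m)) :=
        hterm (m - 1) (by omega) _ (bar_compat ops _) _ _ _ _ _ _
          (bar_le ops _ (hT0 (m - 1) (by omega) (by omega)))
          (refT (m - 1) (by omega) (by omega) _) (refT (m - 1) (by omega) (by omega) _)
      rw [hti (m - 1) (by omega) (y (m - 1)) (y m), show m - 1 + 1 = m by omega, htm] at key
      exact key
    · have h2' : 2 ≤ i := by omega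
      have h3 : i ≤ m - 1 := by omega
      rw [hT' i h2' h3, hv (i - 1), hv i]
      have e1 : min (i - 1 + 1) m = i := by omega
      have e1' : i - 1 + 1 = i := by omega
      have e2 : min (i + 1) m = i + 1 := by omega
      rw [e1, e2]
      refine ⟨t (i - 1) (y (i - 1)) (y (i - 1)) (y i), ?_, ?_⟩
      · rw [hti (i - 1) (by omega) (y (i - 1)) (y i), e1']
        exact hterm i (by omega) _ (bar_compat ops _) _ _ _ _ _ _
          (refT (i + 1) (by omega) (by omega) _) (refT (i + 1) (by omega) (by omega) _)
          (bar_le ops _ (hT0 (i + 1) (by omega) (by omega)))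
      · exact hterm (i - 1) (by omega) _ (bar_compat ops _) _ _ _ _ _ _
          (bar_le ops _ (hT0 (i - 1) (by omega) (by omega)))
          (refT (i - 1) (by omega) (by omega) _) (refT (i - 1) (by omega) (by omega) _)
  have key := nest_pack R' S' T' m u v hRc hSc hTc m le_rfl
  rw [Nat.sub_self, hu 0, hv 0, ht0, ht0] at key
  rw [show (0:ℕ) - 1 = 0 from rfl, hx0, hy0] at key
  exact key
end

section
/- Let A be an algebra with a Mal'tsev term p (p(x,x,y) = y = p(y,x,x)). Then for all congruences α, β, γ, δ of A, the identity (X_2) holds, and in particular the identity (Y_1): α∩(β∘(α∩γ)∘β) = α∩(γ∘(α∩β)∘γ). -/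
section Aux
variable {A : Type*} (p : A → A → A → A)

lemma pres_inter {R S : A → A → Prop} (hR : PreservesRel p R) (hS : PreservesRel p S) :
    PreservesRel p (fun x y => R x y ∧ S x y) := by
  intro a a' b b' c c' h1 h2 h3
  exact ⟨hR _ _ _ _ _ _ h1.1 h2.1 h3.1, hS _ _ _ _ _ _ h1.2 h2.2 h3.2⟩

lemma pres_comp {R S : A → A → Prop} (hR : PreservesRel p R) (hS : PreservesRel p S) :
    PreservesRel p (Relation.Comp R S) := by
  rintro a a' b b' c c' ⟨x, hx1, hx2⟩ ⟨y, hy1, hy2⟩ ⟨z, hz1, hz2⟩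
  exact ⟨p x y z, hR _ _ _ _ _ _ hx1 hy1 hz1, hS _ _ _ _ _ _ hx2 hy2 hz2⟩

lemma perm (hp1 : ∀ x y, p x x y = y) (hp2 : ∀ x y, p y x x = y)
    {R S : A → A → Prop} (hR : PreservesRel p R) (hS : PreservesRel p S)
    (hRrefl : ∀ x, R x x) (hSrefl : ∀ x, S x x)
    {a x y : A} (h1 : R a x) (h2 : S x y) :
    S a (p a x y) ∧ R (p a x y) y := by
  constructor
  · have := hS a a x x x y (hSrefl a) (hSrefl x) h2
    rwa [hp2] at this
  · have := hR a x x x y y h1 (hRrefl x) (hRrefl y)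
    rwa [hp1] at this

/-- one direction of X₂ -/
lemma X2dir (hp1 : ∀ x y, p x x y = y) (hp2 : ∀ x y, p y x x = y)
    {α β γ δ : A → A → Prop}
    (hα : Equivalence α) (hβ : Equivalence β) (hγ : Equivalence γ) (hδ : Equivalence δ)
    (hpα : PreservesRel p α) (hpβ : PreservesRel p β) (hpγ : PreservesRel p γ)
    (hpδ : PreservesRel p δ) (a b : A)
    (h : α a b ∧ Relation.Comp (Relation.Comp β
        (fun x y => α x y ∧ Relation.Comp (Relation.Comp γ
          (fun u v => α u v ∧ δ u v)) γ x y)) β a b) :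
    α a b ∧ Relation.Comp (Relation.Comp γ
        (fun x y => α x y ∧ Relation.Comp (Relation.Comp β
          (fun u v => α u v ∧ δ u v)) β x y)) γ a b := by
  obtain ⟨hab, t, ⟨s, has, hθst⟩, htb⟩ := h
  -- θγ is preserved and reflexive
  have hθpres : PreservesRel p (fun x y => α x y ∧ Relation.Comp (Relation.Comp γ
      (fun u v => α u v ∧ δ u v)) γ x y) :=
    pres_inter p hpα (pres_comp p (pres_comp p hpγ (pres_inter p hpα hpδ)) hpγ)
  have hθrefl : ∀ x, (fun x y => α x y ∧ Relation.Comp (Relation.Comp γ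
      (fun u v => α u v ∧ δ u v)) γ x y) x x := by
    intro x
    exact ⟨hα.refl x, x, ⟨x, hγ.refl x, hα.refl x, hδ.refl x⟩, hγ.refl x⟩
  -- permute β past θγ : get c with θγ a c and β c t
  obtain ⟨⟨hac, v, ⟨u, hau, huv, hduv⟩, hvc⟩, hct⟩ :=
    perm p hp1 hp2 hpβ hθpres (fun x => hβ.refl x) hθrefl has hθst
  set c := p a s t with hc
  have hcb : β c b := hβ.trans hct htb
  -- permute γ past β on v γ c β b : w := p v c b, v β w, γ w b
  obtain ⟨hvw, hwb⟩ :=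
    perm p hp1 hp2 hpγ hpβ (fun x => hγ.refl x) (fun x => hβ.refl x) hvc hcb
  set w := p v c b with hw
  -- permute δ past β on u δ v β w : z := p u v w, u β z, δ z w
  obtain ⟨huz, hdzw⟩ :=
    perm p hp1 hp2 hpδ hpβ (fun x => hδ.refl x) (fun x => hβ.refl x) hduv hvw
  set z := p u v w with hz
  -- α facts
  have hbc : α b c := hα.trans (hα.symm hab) hac
  have hwu : α w u := by
    have := hpα v u c c b c (hα.symm huv) (hα.refl c) hbc
    rwa [hp2] at this
  have hzw : α z w := by
    have := hpα u u v u w w (hα.refl u) (hα.symm huv) (hα.refl w)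
    rwa [hp1] at this
  exact ⟨hab, w, ⟨u, hau, hα.symm hwu, w, ⟨z, huz, hzw, hdzw⟩, hβ.refl w⟩, hwb⟩

/-- one direction of Y₁ -/
lemma Y1dir (hp1 : ∀ x y, p x x y = y) (hp2 : ∀ x y, p y x x = y)
    {α β γ : A → A → Prop}
    (hα : Equivalence α) (hβ : Equivalence β) (hγ : Equivalence γ)
    (hpα : PreservesRel p α) (hpβ : PreservesRel p β) (hpγ : PreservesRel p γ)
    (a b : A)
    (h : α a b ∧ Relation.Comp (Relation.Comp β (fun x y => α x y ∧ γ x y)) β a b) :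
    α a b ∧ Relation.Comp (Relation.Comp γ (fun x y => α x y ∧ β x y)) γ a b := by
  obtain ⟨hab, t, ⟨s, has, hst⟩, htb⟩ := h
  obtain ⟨⟨hac, hgac⟩, hct⟩ :=
    perm p hp1 hp2 hpβ (pres_inter p hpα hpγ) (fun x => hβ.refl x)
      (fun x => ⟨hα.refl x, hγ.refl x⟩) has hst
  exact ⟨hab, b, ⟨p a s t, hgac, hα.trans (hα.symm hac) hab, hβ.trans hct htb⟩, hγ.refl b⟩

end Aux

/-- An algebra with a Mal'tsev term p satisfies the identity (X₂):
α∩(β∘(α∩(γ∘(α∩δ)∘γ))∘β) = α∩(γ∘(α∩(β∘(α∩δ)∘β))∘γ),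
and in particular (Y₁): α∩(β∘(α∩γ)∘β) = α∩(γ∘(α∩β)∘γ). -/
theorem stmt13 {A : Type*} (p : A → A → A → A)
    (hp1 : ∀ x y, p x x y = y) (hp2 : ∀ x y, p y x x = y)
    (α β γ δ : A → A → Prop)
    (hα : Equivalence α) (hβ : Equivalence β) (hγ : Equivalence γ) (hδ : Equivalence δ)
    (hpres : ∀ θ ∈ ([α, β, γ, δ] : List (A → A → Prop)), PreservesRel p θ) :
    (∀ a b : A,
      (α a b ∧ Relation.Comp (Relation.Comp β
        (fun x y => α x y ∧ Relation.Comp (Relation.Comp γ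
          (fun u v => α u v ∧ δ u v)) γ x y)) β a b)
      ↔
      (α a b ∧ Relation.Comp (Relation.Comp γ
        (fun x y => α x y ∧ Relation.Comp (Relation.Comp β
          (fun u v => α u v ∧ δ u v)) β x y)) γ a b)) ∧
    (∀ a b : A,
      (α a b ∧ Relation.Comp (Relation.Comp β (fun x y => α x y ∧ γ x y)) β a b)
      ↔
      (α a b ∧ Relation.Comp (Relation.Comp γ (fun x y => α x y ∧ β x y)) γ a b)) := by
  have hpα : PreservesRel p α := hpres α (by simp)
  have hpβ : PreservesRel p β := hpres β (by simp)
  have hpγ : PreservesRel p γ := hpres γ (by simp)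
  have hpδ : PreservesRel p δ := hpres δ (by simp)
  constructor
  · intro a b
    exact ⟨X2dir p hp1 hp2 hα hβ hγ hδ hpα hpβ hpγ hpδ a b,
           X2dir p hp1 hp2 hα hγ hβ hδ hpα hpγ hpβ hpδ a b⟩
  · intro a b
    exact ⟨Y1dir p hp1 hp2 hα hβ hγ hpα hpβ hpγ a b,
           Y1dir p hp1 hp2 hα hγ hβ hpα hpγ hpβ a b⟩
end
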